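/- arXiv:2101.12747 — 4 statements merged into one kernel-verified Lean document; each statement's English description precedes it below -/
import Mathlib

section
/- Let u be a nonempty finite binary word with length ℓ and height h, and set Φ(u) := −φ(u)/3^h ∈ ℤ₂. Then for every x ∈ ℤ₂ one has T^ℓ(Φ(u) + (2^ℓ/3^h)·x) = x. -/
def wordHeight (u : List Bool) : ℕ := u.count true

def phiAux : List Bool → ℕ
  | [] => 0
  | b :: r => if b then 3 * phiAux r + 2 ^ r.length else phiAux r

def phi (u : List Bool) : ℕ := phiAux u.reverse

lemma phiAux_append (l : List Bool) (b : Bool) :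
    phiAux (l ++ [b]) = 2 * phiAux l + if b then 3 ^ l.count true else 0 := by
  induction l with
  | nil => cases b <;> simp [phiAux]
  | cons c r ih =>
    cases c <;> cases b <;>
      simp [phiAux, ih, List.count_cons, pow_succ] <;> ring

lemma phi_cons (b : Bool) (v : List Bool) :
    phi (b :: v) = 2 * phi v + if b then 3 ^ wordHeight v else 0 := by
  simp [phi, wordHeight, List.reverse_cons, phiAux_append, List.count_reverse]

lemma three_unit : IsUnit (3 : ℤ_[2]) := by
  rw [PadicInt.isUnit_iff]
  have h1 : ‖(3 : ℤ_[2])‖ ≤ 1 := PadicInt.norm_le_one _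
  have h2 : ¬ ‖((3 : ℤ) : ℤ_[2])‖ < 1 := by
    rw [PadicInt.norm_int_lt_one_iff_dvd]; norm_num
  push_cast at h2
  linarith [lt_or_eq_of_le h1, h2]

lemma inv_cancel (k : ℕ) : (3 : ℤ_[2]) ^ k * Ring.inverse ((3 : ℤ_[2]) ^ k) = 1 :=
  Ring.mul_inverse_cancel _ (three_unit.pow k)

lemma pow3_ne (k : ℕ) : ((3 : ℤ_[2]) ^ k) ≠ 0 := (three_unit.pow k).ne_zero

lemma toZMod_two : PadicInt.toZMod (2 : ℤ_[2]) = 0 := by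
  have : (2 : ℤ_[2]) = 1 + 1 := by norm_num
  rw [this, map_add, map_one]; decide

lemma toZMod_three : PadicInt.toZMod (3 : ℤ_[2]) = 1 := by
  have : (3 : ℤ_[2]) = 1 + 1 + 1 := by norm_num
  rw [this, map_add, map_add, map_one]; decide

lemma key (T : ℤ_[2] → ℤ_[2])
    (hT : ∀ x : ℤ_[2], 2 * T x = if PadicInt.toZMod x = 1 then 3 * x + 1 else x) :
    ∀ (u : List Bool) (x : ℤ_[2]),
      T^[u.length]
        (-(phi u : ℤ_[2]) * Ring.inverse ((3 : ℤ_[2]) ^ wordHeight u) +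
          (2 : ℤ_[2]) ^ u.length * Ring.inverse ((3 : ℤ_[2]) ^ wordHeight u) * x) = x := by
  intro u
  induction u with
  | nil => intro x; simp [phi, phiAux, wordHeight]
  | cons b v ih =>
    intro x
    set h := wordHeight v with hh
    set l := v.length with hl
    set y' := -(phi v : ℤ_[2]) * Ring.inverse ((3 : ℤ_[2]) ^ h) +
        (2 : ℤ_[2]) ^ l * Ring.inverse ((3 : ℤ_[2]) ^ h) * x with hy'
    have hlen : (b :: v).length = l + 1 := by simp [hl]
    have h3 : (3 : ℤ_[2]) ^ h * y' = -(phi v : ℤ_[2]) + 2 ^ l * x := by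
      rw [hy']
      linear_combination (-(phi v : ℤ_[2]) + 2 ^ l * x) * inv_cancel h
    cases b with
    | false =>
      have hwh : wordHeight (false :: v) = h := by simp [wordHeight, List.count_cons, hh]
      have hph : phi (false :: v) = 2 * phi v := by simp [phi_cons, hh]
      set y := -(phi (false :: v) : ℤ_[2]) * Ring.inverse ((3 : ℤ_[2]) ^ wordHeight (false :: v)) +
          (2 : ℤ_[2]) ^ (false :: v).length * Ring.inverse ((3 : ℤ_[2]) ^ wordHeight (false :: v)) * x with hy
      have hy2 : y = 2 * y' := by
        rw [hy, hy', hwh, hph, hlen]; push_cast; ring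
      have hpar : PadicInt.toZMod y ≠ 1 := by
        rw [hy2, map_mul, toZMod_two, zero_mul]; decide
      have hTy : T y = y' := by
        have h1 := hT y
        rw [if_neg hpar] at h1
        have h2 : 2 * T y = 2 * y' := by rw [h1, hy2]
        exact mul_left_cancel₀ (by norm_num : (2:ℤ_[2]) ≠ 0) h2
      rw [hlen, Function.iterate_succ_apply, hTy]
      exact ih x
    | true =>
      have hwh : wordHeight (true :: v) = h + 1 := by simp [wordHeight, List.count_cons, hh]
      have hph : phi (true :: v) = 2 * phi v + 3 ^ h := by simp [phi_cons, hh]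
      set y := -(phi (true :: v) : ℤ_[2]) * Ring.inverse ((3 : ℤ_[2]) ^ wordHeight (true :: v)) +
          (2 : ℤ_[2]) ^ (true :: v).length * Ring.inverse ((3 : ℤ_[2]) ^ wordHeight (true :: v)) * x with hy
      have heq : (3 : ℤ_[2]) ^ (h+1) * y =
          -(2 * (phi v : ℤ_[2]) + 3 ^ h) + 2 ^ (l+1) * x := by
        rw [hy, hwh, hph, hlen]; push_cast
        linear_combination (-(2 * (phi v : ℤ_[2]) + 3 ^ h) + 2 ^ (l+1) * x) * inv_cancel (h+1)
      have hpar : PadicInt.toZMod y = 1 := by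
        have := congrArg PadicInt.toZMod heq
        rw [map_mul, map_pow, toZMod_three, one_pow, one_mul] at this
        rw [this, map_add, map_neg, map_add, map_mul, map_mul, map_pow, map_pow,
          toZMod_two, toZMod_three]
        simp
      have hTy : T y = y' := by
        have h1 := hT y
        rw [if_pos hpar] at h1
        have h2 : (3 : ℤ_[2]) ^ (h+1) * (2 * T y) = (3 : ℤ_[2]) ^ (h+1) * (2 * y') := by
          rw [h1]
          have e1 : (3 : ℤ_[2]) ^ (h+1) * (3 * y + 1) = 3 * ((3:ℤ_[2])^(h+1) * y) + 3^(h+1) := by ring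
          have e2 : (3 : ℤ_[2]) ^ (h+1) * (2 * y') = 2 * 3 * ((3:ℤ_[2])^h * y') := by ring
          rw [e1, e2, heq, h3]; ring
        exact mul_left_cancel₀ (by norm_num : (2:ℤ_[2]) ≠ 0)
          (mul_left_cancel₀ (pow3_ne (h+1)) h2)
      rw [hlen, Function.iterate_succ_apply, hTy]
      exact ih x

/-- If `T` is the 3x+1 map on `ℤ₂`, `u` is a nonempty finite binary word of
length `ℓ` and height `h`, and `Φ(u) = −φ(u)/3^h ∈ ℤ₂`, then for every
`x ∈ ℤ₂` one has `T^ℓ(Φ(u) + (2^ℓ/3^h)·x) = x`. -/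
theorem stmt4 (T : ℤ_[2] → ℤ_[2])
    (hT : ∀ x : ℤ_[2], 2 * T x = if PadicInt.toZMod x = 1 then 3 * x + 1 else x)
    (u : List Bool) (hu : u ≠ []) (x : ℤ_[2]) :
    T^[u.length]
        (-(phi u : ℤ_[2]) * Ring.inverse ((3 : ℤ_[2]) ^ wordHeight u) +
          (2 : ℤ_[2]) ^ u.length * Ring.inverse ((3 : ℤ_[2]) ^ wordHeight u) * x) = x :=
  key T hT u x
end

section
/- Let v be an aperiodic infinite binary word such that liminf_{ℓ→∞} h(ℓ)/ℓ > log 2 / log 3, so that the series Φ_ℝ(v) converges; let ζ be its sum. Then the set {T_u(ζ) : u a nonempty prefix of v} ⊆ ℝ has an accumulation point in ℝ. -/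
/-- An infinite binary word is eventually periodic if for some period `p ≥ 1`
its digits satisfy `v (n+p) = v n` from some index on. -/
def EventuallyPeriodicWord (v : ℕ → Bool) : Prop :=
  ∃ p : ℕ, 0 < p ∧ ∃ N : ℕ, ∀ n ≥ N, v (n + p) = v n

/-- The position of the `i`-th `1` (0-indexed) of the infinite binary word `v`. -/
noncomputable def onePos (v : ℕ → Bool) (i : ℕ) : ℕ :=
  Nat.nth (fun n => v n = true) i

/-- The `m`-th partial sum of the series `Φ_ℝ(v) = −∑_{i} 2^{d_i}/3^{i+1}`,
where `d_i` enumerates the positions of the `1`s of `v`. -/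
noncomputable def phiPartial (v : ℕ → Bool) (m : ℕ) : ℝ :=
  -∑ i ∈ Finset.range m, (2 : ℝ) ^ onePos v i / 3 ^ (i + 1)

/-- The number of `1`s among the first `ℓ` digits of the infinite binary word `v`. -/
def heightOfPrefix (v : ℕ → Bool) (ℓ : ℕ) : ℕ :=
  ((Finset.range ℓ).filter fun k => v k = true).card

/-- The maps `T_0(x) = x/2` and `T_1(x) = (3x+1)/2` on `ℝ`. -/
noncomputable def Tb (b : Bool) (x : ℝ) : ℝ := if b then (3 * x + 1) / 2 else x / 2

/-- For a finite binary word `u = v_0 v_1 ⋯ v_{ℓ−1}`, the composite map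
`T_u = T_{v_{ℓ−1}} ∘ ⋯ ∘ T_{v_1} ∘ T_{v_0}` on `ℝ` (first digit applied first). -/
noncomputable def Tword : List Bool → ℝ → ℝ
  | [], x => x
  | b :: u, x => Tword u (Tb b x)

/-- The prefix of length `ℓ` of an infinite binary word `v`. -/
def wordPrefix (v : ℕ → Bool) (ℓ : ℕ) : List Bool := (List.range ℓ).map v

open Filter

lemma heightOfPrefix_eq_count (v : ℕ → Bool) (ℓ : ℕ) :
    heightOfPrefix v ℓ = Nat.count (fun n => v n = true) ℓ := by
  rw [Nat.count_eq_card_filter_range]; rfl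

lemma wordPrefix_succ (v : ℕ → Bool) (ℓ : ℕ) :
    wordPrefix v (ℓ + 1) = wordPrefix v ℓ ++ [v ℓ] := by
  simp [wordPrefix, List.range_succ]

lemma Tword_append (u w : List Bool) (x : ℝ) :
    Tword (u ++ w) x = Tword w (Tword u x) := by
  induction u generalizing x with
  | nil => rfl
  | cons b u ih => simp [Tword, ih]

lemma Tword_succ (v : ℕ → Bool) (ℓ : ℕ) (x : ℝ) :
    Tword (wordPrefix v (ℓ + 1)) x = Tb (v ℓ) (Tword (wordPrefix v ℓ) x) := by
  rw [wordPrefix_succ, Tword_append]; rfl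

lemma height_succ (v : ℕ → Bool) (ℓ : ℕ) :
    heightOfPrefix v (ℓ + 1) =
      heightOfPrefix v ℓ + if v ℓ = true then 1 else 0 := by
  simp only [heightOfPrefix_eq_count]
  exact Nat.count_succ _ _

/-- Key algebraic identity. -/
lemma key_identity (v : ℕ → Bool) (x : ℝ) (ℓ : ℕ) :
    Tword (wordPrefix v ℓ) x =
      3 ^ heightOfPrefix v ℓ / 2 ^ ℓ * (x - phiPartial v (heightOfPrefix v ℓ)) := by
  induction ℓ with
  | zero => simp [wordPrefix, Tword, heightOfPrefix, phiPartial]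
  | succ ℓ ih =>
    rw [Tword_succ, ih, height_succ]
    by_cases hb : v ℓ = true
    · rw [if_pos hb]
      have hone : onePos v (heightOfPrefix v ℓ) = ℓ := by
        rw [heightOfPrefix_eq_count]; exact Nat.nth_count hb
      have hP : phiPartial v (heightOfPrefix v ℓ + 1) =
          phiPartial v (heightOfPrefix v ℓ) - 2 ^ ℓ / 3 ^ (heightOfPrefix v ℓ + 1) := by
        simp [phiPartial, Finset.sum_range_succ, hone]
        ring
      rw [hb, hP, Tb]
      simp only [if_true]
      have h2 : (0:ℝ) < 2 ^ ℓ := by positivity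
      have h3 : (0:ℝ) < 3 ^ (heightOfPrefix v ℓ) := by positivity
      field_simp
      ring
    · rw [if_neg hb]
      rw [Bool.not_eq_true] at hb
      rw [hb, Tb]
      simp only [Bool.false_eq_true, if_false, add_zero]
      rw [pow_succ]
      ring
lemma geom_bound {r : ℝ} (h0 : 0 ≤ r) (h1 : r < 1) (n : ℕ) :
    ∑ j ∈ Finset.range n, r ^ j ≤ 1 / (1 - r) := by
  rw [geom_sum_eq h1.ne]
  have h2 : (0:ℝ) < 1 - r := by linarith
  have h3 : (r ^ n - 1)/(r - 1) = (1 - r ^ n)/(1 - r) := by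
    rw [← neg_div_neg_eq]; ring_nf
  rw [h3]
  have hrn : 0 ≤ r ^ n := by positivity
  gcongr
  linarith

lemma phi_anti (v : ℕ → Bool) : ∀ {m n : ℕ}, m ≤ n → phiPartial v n ≤ phiPartial v m := by
  intro m n hmn
  simp only [phiPartial, neg_le_neg_iff]
  apply Finset.sum_le_sum_of_subset_of_nonneg (Finset.range_subset_range.2 hmn)
  intro i _ _
  positivity

lemma zeta_le (v : ℕ → Bool) (ζ : ℝ) (hζ : Tendsto (phiPartial v) atTop (nhds ζ)) (m : ℕ) :
    ζ ≤ phiPartial v m :=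
  le_of_tendsto hζ (eventually_atTop.2 ⟨m, fun _ hn => phi_anti v hn⟩)

lemma zeta_lt (v : ℕ → Bool) (ζ : ℝ) (hζ : Tendsto (phiPartial v) atTop (nhds ζ)) (m : ℕ) :
    ζ < phiPartial v m := by
  refine lt_of_le_of_lt (zeta_le v ζ hζ (m+1)) ?_
  have : phiPartial v (m+1) = phiPartial v m - 2 ^ onePos v m / 3 ^ (m+1) := by
    simp [phiPartial, Finset.sum_range_succ]; ring
  rw [this]
  have : (0:ℝ) < 2 ^ onePos v m / 3 ^ (m+1) := by positivity
  linarith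

lemma exists_good (F : ℕ → ℝ) (hF : Tendsto F atTop atTop) (m : ℕ) :
    ∃ ℓ ≥ m, ∀ n ≥ ℓ, F ℓ ≤ F n := by
  obtain ⟨M₀, hM₀⟩ := eventually_atTop.1 (tendsto_atTop.1 hF (F m + 1))
  set M := max m M₀ with hM
  have hne : (Finset.Icc m M).Nonempty := ⟨m, Finset.mem_Icc.2 ⟨le_rfl, le_max_left _ _⟩⟩
  obtain ⟨ℓ, hℓmem, hℓmin⟩ := Finset.exists_min_image (Finset.Icc m M) F hne
  rw [Finset.mem_Icc] at hℓmem
  refine ⟨ℓ, hℓmem.1, fun n hn => ?_⟩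
  rcases le_or_gt n M with h | h
  · exact hℓmin n (Finset.mem_Icc.2 ⟨le_trans hℓmem.1 hn, h⟩)
  · have h1 : F m + 1 ≤ F n := hM₀ n (le_trans (le_max_right _ _) h.le)
    have h2 : F ℓ ≤ F m := hℓmin m (Finset.mem_Icc.2 ⟨le_rfl, le_max_left _ _⟩)
    linarith

lemma good_bound (v : ℕ → Bool) (ζ : ℝ) (hζ : Tendsto (phiPartial v) atTop (nhds ζ))
    (hinf : {n | v n = true}.Infinite) (γ : ℝ) (hγ0 : 0 < γ)
    (hγ1 : Real.log 2 / Real.log 3 < γ) (ℓ : ℕ)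
    (hgood : ∀ n ≥ ℓ, (heightOfPrefix v ℓ : ℝ) - γ * ℓ ≤ (heightOfPrefix v n : ℝ) - γ * n) :
    -(1 / (3 * (1 - (2:ℝ) ^ (1/γ) / 3))) ≤ Tword (wordPrefix v ℓ) ζ := by
  classical
  set p : ℕ → Prop := fun n => v n = true with hp
  have hinf' : (setOf p).Infinite := hinf
  set k := heightOfPrefix v ℓ with hk
  set R : ℝ := (2:ℝ) ^ (1/γ) with hR
  have hRpos : 0 < R := Real.rpow_pos_of_pos (by norm_num) _
  have hR3 : R < 3 := by
    have hlog3 : (0:ℝ) < Real.log 3 := Real.log_pos (by norm_num)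
    have h1 : Real.log R = (1/γ) * Real.log 2 := Real.log_rpow (by norm_num) _
    have h2 : Real.log R < Real.log 3 := by
      rw [h1]
      have := (div_lt_iff₀ hlog3).1 hγ1
      rw [div_mul_eq_mul_div, div_lt_iff₀ hγ0, one_mul]
      calc Real.log 2 < γ * Real.log 3 := by linarith [this]
        _ = Real.log 3 * γ := mul_comm _ _
    calc R = Real.exp (Real.log R) := (Real.exp_log hRpos).symm
      _ < Real.exp (Real.log 3) := Real.exp_lt_exp.2 h2
      _ = 3 := Real.exp_log (by norm_num)
  set r : ℝ := R / 3 with hr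
  have hr0 : 0 ≤ r := by positivity
  have hr1 : r < 1 := by rw [hr]; linarith [(div_lt_one (by norm_num : (0:ℝ) < 3)).2 hR3]
  -- position bound : for all j, (onePos v (k+j) : ℝ) ≤ ℓ + j / γ  and 2^{d} ≤ 2^ℓ * R^j
  have hd : ∀ j : ℕ, (2:ℝ) ^ onePos v (k + j) ≤ 2 ^ ℓ * R ^ j := by
    intro j
    have hkcount : k = Nat.count p ℓ := heightOfPrefix_eq_count v ℓ
    have hdge : ℓ ≤ Nat.nth p (k + j) := by
      rw [← Nat.count_le_iff_le_nth hinf', ← hkcount]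
      exact Nat.le_add_right _ _
    have hcount : (heightOfPrefix v (Nat.nth p (k + j)) : ℝ) = (k + j : ℕ) := by
      rw [heightOfPrefix_eq_count, Nat.count_nth_of_infinite hinf']
    have h1 := hgood (Nat.nth p (k+j)) hdge
    rw [hcount] at h1
    push_cast at h1
    -- γ * (d - ℓ) ≤ j
    have h2 : (Nat.nth p (k+j) : ℝ) ≤ ℓ + j / γ := by
      have hγd : ((Nat.nth p (k+j) : ℝ) - ℓ) * γ ≤ j := by nlinarith
      have h5 : ((Nat.nth p (k+j) : ℝ) - ℓ) ≤ j / γ := (le_div_iff₀ hγ0).2 hγd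
      linarith
    have h3 : (2:ℝ) ^ onePos v (k+j) = (2:ℝ) ^ ((Nat.nth p (k+j) : ℕ) : ℝ) := by
      rw [Real.rpow_natCast]; rfl
    rw [h3]
    have h4 : (2:ℝ) ^ ((Nat.nth p (k+j) : ℕ) : ℝ) ≤ (2:ℝ) ^ ((ℓ : ℝ) + j / γ) :=
      Real.rpow_le_rpow_left_iff (by norm_num) |>.2 h2
    refine le_trans h4 ?_
    rw [Real.rpow_add (by norm_num), Real.rpow_natCast]
    have h5 : (2:ℝ) ^ ((j:ℝ) / γ) = R ^ j := by
      rw [hR, ← Real.rpow_natCast ((2:ℝ) ^ (1/γ)) j, ← Real.rpow_mul (by norm_num)]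
      congr 1
      field_simp
    rw [h5]
  -- partial tail sums bounded
  have hD : ∀ m, phiPartial v k - phiPartial v m ≤ 2 ^ ℓ / 3 ^ (k+1) * (1/(1-r)) := by
    intro m
    rcases le_or_gt m k with h | h
    · have := phi_anti v h
      have hpos : (0:ℝ) ≤ 2 ^ ℓ / 3 ^ (k+1) * (1/(1-r)) := by
        have : (0:ℝ) < 1 - r := by linarith
        positivity
      linarith
    · have hsum : phiPartial v k - phiPartial v m
          = ∑ i ∈ Finset.Ico k m, (2:ℝ) ^ onePos v i / 3 ^ (i+1) := by
        simp only [phiPartial]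
        rw [Finset.sum_Ico_eq_sub _ h.le]
        ring
      rw [hsum, Finset.sum_Ico_eq_sum_range]
      have hbound : ∀ j ∈ Finset.range (m - k),
          (2:ℝ) ^ onePos v (k + j) / 3 ^ (k + j + 1) ≤ 2 ^ ℓ / 3 ^ (k+1) * r ^ j := by
        intro j _
        have h1 := hd j
        have h2 : ((3:ℝ)) ^ (k + j + 1) = 3 ^ (k+1) * 3 ^ j := by ring
        rw [h2, hr, div_pow, div_mul_div_comm]
        gcongr
      calc ∑ j ∈ Finset.range (m-k), (2:ℝ) ^ onePos v (k + j) / 3 ^ (k + j + 1)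
          ≤ ∑ j ∈ Finset.range (m-k), 2 ^ ℓ / 3 ^ (k+1) * r ^ j := Finset.sum_le_sum hbound
        _ = 2 ^ ℓ / 3 ^ (k+1) * ∑ j ∈ Finset.range (m-k), r ^ j := by rw [Finset.mul_sum]
        _ ≤ 2 ^ ℓ / 3 ^ (k+1) * (1/(1-r)) := by
            have := geom_bound hr0 hr1 (m-k)
            have hpos : (0:ℝ) ≤ 2 ^ ℓ / 3 ^ (k+1) := by positivity
            exact mul_le_mul_of_nonneg_left this hpos
  -- pass to the limit
  have hζge : phiPartial v k - 2 ^ ℓ / 3 ^ (k+1) * (1/(1-r)) ≤ ζ := by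
    exact ge_of_tendsto hζ (Eventually.of_forall fun n => by linarith [hD n])
  rw [key_identity]
  have hA : (0:ℝ) < 3 ^ k / 2 ^ ℓ := by positivity
  rw [← hk]
  have hcalc : (3:ℝ) ^ k / 2 ^ ℓ * (2 ^ ℓ / 3 ^ (k+1) * (1/(1-r))) = 1/(3*(1-r)) := by
    have h2 : (0:ℝ) < 2 ^ ℓ := by positivity
    have h3 : (0:ℝ) < 3 ^ k := by positivity
    have hc : (0:ℝ) < 1 - r := by linarith
    rw [pow_succ]
    field_simp
  have : ζ - phiPartial v k ≥ -(2 ^ ℓ / 3 ^ (k+1) * (1/(1-r))) := by linarith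
  calc -(1/(3*(1 - r))) = 3 ^ k / 2 ^ ℓ * -(2 ^ ℓ / 3 ^ (k+1) * (1/(1-r))) := by
        rw [mul_neg, hcalc]
    _ ≤ 3 ^ k / 2 ^ ℓ * (ζ - phiPartial v k) := mul_le_mul_of_nonneg_left this hA.le

lemma val3 : padicValRat 2 3 = 0 := by
  have : ¬ (2 ∣ 3) := by norm_num
  rw [show ((3:ℚ)) = ((3:ℕ):ℚ) by norm_num, padicValRat.of_nat]
  simp [padicValNat.eq_zero_of_not_dvd this]

lemma val_div2 {q : ℚ} (hq : q ≠ 0) : padicValRat 2 (q/2) = padicValRat 2 q - 1 := by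
  rw [padicValRat.div hq (by norm_num : (2:ℚ) ≠ 0)]
  congr 1
  exact_mod_cast padicValRat.self (by norm_num : 1 < 2)

lemma val_3q (q : ℚ) (hq : q ≠ 0) : padicValRat 2 (3*q) = padicValRat 2 q := by
  rw [padicValRat.mul (by norm_num) hq, val3, zero_add]

lemma val_neg_third : padicValRat 2 (-(1/3) : ℚ) = 0 := by
  rw [padicValRat.neg, one_div, padicValRat.inv, val3, neg_zero]

lemma val_3q1_neg {q : ℚ} (hq : q ≠ 0) (h : padicValRat 2 q < 0) :
    3*q+1 ≠ 0 ∧ padicValRat 2 (3*q+1) = padicValRat 2 q := by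
  have hne : 3*q+1 ≠ 0 := by
    intro h0
    have : q = -(1/3) := by linarith
    rw [this, val_neg_third] at h; exact absurd h (by norm_num)
  have h3q : (3:ℚ)*q ≠ 0 := by simp [hq]
  have hval : padicValRat 2 (3*q) < padicValRat 2 1 := by
    rw [val_3q q hq, padicValRat.one]; exact h
  refine ⟨hne, ?_⟩
  rw [padicValRat.add_eq_of_lt (p := 2) hne h3q one_ne_zero hval, val_3q q hq]

lemma val_3q1_pos {q : ℚ} (hq : q ≠ 0) (h : 1 ≤ padicValRat 2 q) :
    3*q+1 ≠ 0 ∧ padicValRat 2 (3*q+1) = 0 := by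
  have hne : 3*q+1 ≠ 0 := by
    intro h0
    have : q = -(1/3) := by linarith
    rw [this, val_neg_third] at h; exact absurd h (by norm_num)
  have h3q : (3:ℚ)*q ≠ 0 := by simp [hq]
  have hval : padicValRat 2 (1:ℚ) < padicValRat 2 (3*q) := by
    rw [val_3q q hq, padicValRat.one]; linarith
  refine ⟨hne, ?_⟩
  have := padicValRat.add_eq_of_lt (p := 2) (by rwa [add_comm] at hne) one_ne_zero h3q hval
  rw [add_comm] at this
  rw [this, padicValRat.one]

noncomputable def ratP (v : ℕ → Bool) (k : ℕ) : ℚ :=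
  ∑ i ∈ Finset.range k, (2:ℚ) ^ onePos v i / 3 ^ (i + 1)

lemma ratP_cast (v : ℕ → Bool) (k : ℕ) : ((ratP v k : ℚ) : ℝ) = -phiPartial v k := by
  simp only [ratP, phiPartial, neg_neg]
  push_cast
  rfl

lemma not_two_dvd_three_pow (k : ℕ) : ¬ (2 ∣ 3 ^ k) := by
  intro h
  have := Nat.Prime.dvd_of_dvd_pow Nat.prime_two h
  norm_num at this

lemma pow23_inj {k1 k2 ℓ1 ℓ2 : ℕ} (h : (3:ℚ) ^ k1 / 2 ^ ℓ1 = 3 ^ k2 / 2 ^ ℓ2) :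
    ℓ1 = ℓ2 := by
  have h2 : ((3:ℚ) ^ k1) * 2 ^ ℓ2 = 3 ^ k2 * 2 ^ ℓ1 := by
    field_simp at h
    linarith [h]
  have hnat : 3 ^ k1 * 2 ^ ℓ2 = 3 ^ k2 * 2 ^ ℓ1 := by exact_mod_cast h2
  have hval := congrArg (padicValNat 2) hnat
  rw [padicValNat.mul (by positivity) (by positivity),
    padicValNat.mul (by positivity) (by positivity),
    padicValNat.eq_zero_of_not_dvd (not_two_dvd_three_pow k1),
    padicValNat.eq_zero_of_not_dvd (not_two_dvd_three_pow k2),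
    padicValNat.prime_pow, padicValNat.prime_pow, zero_add, zero_add] at hval
  exact hval.symm

lemma eventually_periodic_of_returns (v : ℕ → Bool) (ζ : ℝ)
    (hZneg : ∀ ℓ, Tword (wordPrefix v ℓ) ζ < 0) (x : ℝ) (L : Set ℕ) (hL : L.Infinite)
    (hLx : ∀ ℓ ∈ L, Tword (wordPrefix v ℓ) ζ = x) : EventuallyPeriodicWord v := by
  classical
  set h : ℕ → ℕ := fun ℓ => heightOfPrefix v ℓ with hh
  set A : ℕ → ℚ := fun ℓ => (3:ℚ) ^ h ℓ / 2 ^ ℓ with hA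
  have hApos : ∀ ℓ, 0 < A ℓ := fun ℓ => by positivity
  have hAval : ∀ ℓ, A ℓ = (3:ℚ) ^ heightOfPrefix v ℓ / 2 ^ ℓ := fun ℓ => rfl
  have hkey : ∀ ℓ, Tword (wordPrefix v ℓ) ζ = (A ℓ : ℝ) * (ζ + (ratP v (h ℓ) : ℝ)) := by
    intro ℓ
    rw [key_identity, ratP_cast, hAval]
    push_cast
    ring
  -- obtain two return times
  obtain ⟨ℓ1, hℓ1L⟩ := hL.nonempty
  obtain ⟨ℓ2, hℓ2L, hℓ12⟩ := hL.exists_gt ℓ1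
  -- ζ is rational
  have hAne : A ℓ1 ≠ A ℓ2 := by
    intro hcon
    rw [hAval, hAval] at hcon
    exact (Nat.lt_irrefl ℓ2) (pow23_inj hcon ▸ hℓ12)
  set q : ℚ := ((A ℓ2) * ratP v (h ℓ2) - (A ℓ1) * ratP v (h ℓ1)) / (A ℓ1 - A ℓ2) with hq
  have hqζ : (q : ℝ) = ζ := by
    have heq : Tword (wordPrefix v ℓ1) ζ = Tword (wordPrefix v ℓ2) ζ := by
      rw [hLx ℓ1 hℓ1L, hLx ℓ2 hℓ2L]
    rw [hkey, hkey] at heq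
    have hsub : ((A ℓ1 : ℝ) - (A ℓ2 : ℝ)) ≠ 0 := by
      intro hcon
      apply hAne
      exact_mod_cast sub_eq_zero.1 hcon
    rw [hq]
    push_cast
    rw [div_eq_iff hsub]
    linarith [heq]
  -- rational orbit
  set Q : ℕ → ℚ := fun ℓ => A ℓ * (q + ratP v (h ℓ)) with hQ
  have hQZ : ∀ ℓ, ((Q ℓ : ℚ) : ℝ) = Tword (wordPrefix v ℓ) ζ := by
    intro ℓ
    rw [hkey, hQ]
    push_cast [hqζ]
    ring
  have hQne : ∀ ℓ, Q ℓ ≠ 0 := by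
    intro ℓ hcon
    have h1 := hZneg ℓ
    rw [← hQZ ℓ, hcon] at h1
    norm_num at h1
  have hQsucc : ∀ ℓ, Q (ℓ+1) = if v ℓ then (3 * Q ℓ + 1)/2 else Q ℓ / 2 := by
    intro ℓ
    have hreal : Tword (wordPrefix v (ℓ+1)) ζ = Tb (v ℓ) (Tword (wordPrefix v ℓ) ζ) :=
      Tword_succ v ℓ ζ
    have hcast : ((Q (ℓ+1) : ℚ) : ℝ) = ((if v ℓ then (3 * Q ℓ + 1)/2 else Q ℓ / 2 : ℚ) : ℝ) := by
      rw [hQZ, hreal, ← hQZ ℓ, Tb]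
      by_cases hb : v ℓ
      · rw [if_pos hb, if_pos hb]; push_cast; ring
      · rw [if_neg hb, if_neg hb]; push_cast; ring
    exact_mod_cast hcast
  set ν : ℕ → ℤ := fun n => padicValRat 2 (Q n) with hν
  -- constant value at return times
  have hQL : ∀ ℓ ∈ L, Q ℓ = Q ℓ1 := by
    intro ℓ hℓ
    have hcast : ((Q ℓ : ℚ) : ℝ) = ((Q ℓ1 : ℚ) : ℝ) := by
      rw [hQZ, hQZ, hLx ℓ hℓ, hLx ℓ1 hℓ1L]
    exact_mod_cast hcast
  -- valuation decreases strictly when negative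
  have S1 : ∀ n, ν n < 0 → ν (n+1) = ν n - 1 := by
    intro n hn
    by_cases hb : v n
    · have hQn1 : Q (n+1) = (3 * Q n + 1)/2 := by rw [hQsucc, if_pos hb]
      have h3q1 : 3 * Q n + 1 ≠ 0 := by
        intro hcon
        apply hQne (n+1)
        rw [hQn1, hcon, zero_div]
      have hval := (val_3q1_neg (hQne n) hn).2
      simp only [hν]
      rw [hQn1, val_div2 h3q1, hval]
    · have hQn1 : Q (n+1) = Q n / 2 := by rw [hQsucc, if_neg hb]
      simp only [hν]
      rw [hQn1, val_div2 (hQne n)]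
  have S2 : ∀ n k, ν n < 0 → ν (n+k) ≤ ν n - k := by
    intro n k hn
    induction k with
    | zero => simp
    | succ k ih =>
      have hk : ν (n+k) < 0 := by
        have h0 : (0:ℤ) ≤ k := Int.ofNat_nonneg k
        omega
      have h1 := S1 (n+k) hk
      rw [show n + (k+1) = n + k + 1 by ring, h1]
      push_cast
      omega
  have S3 : ∀ n, 0 ≤ ν n := by
    intro n
    by_contra hcon
    push_neg at hcon
    set c : ℤ := ν ℓ1 with hc
    obtain ⟨m, hmL, hmgt⟩ := hL.exists_gt (n + (ν n - c).toNat)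
    have hνm : ν m = c := by simp only [hν, hc]; rw [hQL m hmL]
    have hmn : n ≤ m := by omega
    have h2 := S2 n (m - n) hcon
    rw [show n + (m - n) = m by omega, hνm] at h2
    have hbig : (ν n - c) < ((m - n : ℕ) : ℤ) := by
      have ha : (ν n - c) ≤ ((ν n - c).toNat : ℤ) := Int.self_le_toNat _
      have hb2 : ((ν n - c).toNat : ℤ) < ((m - n : ℕ) : ℤ) := by
        exact_mod_cast by omega
      omega
    omega
  -- digits are determined by the valuation
  have S4 : ∀ n, v n = decide (ν n = 0) := by
    intro n
    by_cases hb : v n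
    · rw [hb]
      have hQn1 : Q (n+1) = (3 * Q n + 1)/2 := by rw [hQsucc, if_pos hb]
      by_cases h0 : ν n = 0
      · simp [h0]
      · exfalso
        have h1 : 1 ≤ ν n := by have := S3 n; omega
        have hval := (val_3q1_pos (hQne n) h1).2
        have h3q1 : 3 * Q n + 1 ≠ 0 := (val_3q1_pos (hQne n) h1).1
        have hneg : ν (n+1) = -1 := by
          simp only [hν]
          rw [hQn1, val_div2 h3q1, hval]
          norm_num
        have := S3 (n+1)
        omega
    · rw [Bool.not_eq_true] at hb
      rw [hb]
      have hQn1 : Q (n+1) = Q n / 2 := by rw [hQsucc, if_neg (by simp [hb])]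
      have hν1 : ν (n+1) = ν n - 1 := by
        simp only [hν]
        rw [hQn1, val_div2 (hQne n)]
      have h1 : 1 ≤ ν n := by have := S3 (n+1); omega
      have hne0 : ¬ (ν n = 0) := by omega
      simp [hne0]
  have hQdet : ∀ n, Q (n+1) = (if ν n = 0 then (3 * Q n + 1)/2 else Q n / 2) := by
    intro n
    rw [hQsucc, S4 n]
    by_cases h0 : ν n = 0
    · simp [h0]
    · simp [h0]
  -- periodicity
  set per : ℕ := ℓ2 - ℓ1 with hper
  have hperpos : 0 < per := by omega
  have hbase : Q (ℓ1 + per) = Q ℓ1 := by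
    rw [show ℓ1 + per = ℓ2 by omega]
    exact hQL ℓ2 hℓ2L
  have hind : ∀ k, Q (ℓ1 + k + per) = Q (ℓ1 + k) := by
    intro k
    induction k with
    | zero => simpa using hbase
    | succ k ih =>
      have hνeq : ν (ℓ1 + k + per) = ν (ℓ1 + k) := by
        simp only [hν]; rw [ih]
      rw [show ℓ1 + (k+1) + per = (ℓ1 + k + per) + 1 by ring, hQdet, ih, hνeq,
        show ℓ1 + (k+1) = (ℓ1 + k) + 1 by ring, hQdet]
  refine ⟨per, hperpos, ℓ1, fun n hn => ?_⟩
  have hQeq : Q (n + per) = Q n := by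
    obtain ⟨k, rfl⟩ := Nat.exists_eq_add_of_le hn
    exact hind k
  have hνeq : ν (n + per) = ν n := by
    simp only [hν]; rw [hQeq]
  rw [S4 n, S4 (n + per), hνeq]


/-- If `v` is aperiodic with `liminf h(ℓ)/ℓ > log 2 / log 3` and the series
`Φ_ℝ(v)` converges to `ζ`, then the set `{T_u(ζ) : u a nonempty prefix of v}`
has an accumulation point in `ℝ`. -/
theorem stmt12 (v : ℕ → Bool) (hv : ¬ EventuallyPeriodicWord v)
    (hlim : Real.log 2 / Real.log 3 <
      liminf (fun ℓ : ℕ => (heightOfPrefix v ℓ : ℝ) / ℓ) atTop)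
    (ζ : ℝ) (hζ : Tendsto (phiPartial v) atTop (nhds ζ)) :
    ∃ p : ℝ, AccPt p (Filter.principal
      {y : ℝ | ∃ ℓ : ℕ, 1 ≤ ℓ ∧ Tword (wordPrefix v ℓ) ζ = y}) := by
  classical
  set β : ℝ := Real.log 2 / Real.log 3 with hβ
  set Lf : ℝ := liminf (fun ℓ : ℕ => (heightOfPrefix v ℓ : ℝ) / ℓ) atTop with hLf
  have hβ0 : 0 < β := div_pos (Real.log_pos one_lt_two) (Real.log_pos (by norm_num))
  set γ : ℝ := (2*β + Lf)/3 with hγ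
  set γ' : ℝ := (β + 2*Lf)/3 with hγ'
  have hβγ : β < γ := by rw [hγ]; linarith
  have hγγ' : γ < γ' := by rw [hγ, hγ']; linarith
  have hγ'L : γ' < Lf := by rw [hγ']; linarith
  have hγ0 : 0 < γ := lt_trans hβ0 hβγ
  -- eventual lower bound for the density
  have hbdd : IsBoundedUnder (· ≥ ·) atTop (fun ℓ : ℕ => (heightOfPrefix v ℓ : ℝ) / ℓ) :=
    Filter.isBoundedUnder_of ⟨0, fun ℓ => div_nonneg (Nat.cast_nonneg _) (Nat.cast_nonneg _)⟩
  have hev : ∀ᶠ ℓ in atTop, γ' < (heightOfPrefix v ℓ : ℝ) / ℓ :=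
    eventually_lt_of_lt_liminf hγ'L hbdd
  obtain ⟨N, hN⟩ := eventually_atTop.1 hev
  set N1 : ℕ := max N 1 with hN1
  have hge : ∀ ℓ ≥ N1, γ' * ℓ ≤ (heightOfPrefix v ℓ : ℝ) := by
    intro ℓ hℓ
    have h1 := hN ℓ (le_trans (le_max_left _ _) hℓ)
    have hℓ1 : 1 ≤ ℓ := le_trans (le_max_right _ _) hℓ
    have hℓpos : (0:ℝ) < ℓ := by exact_mod_cast hℓ1
    rw [lt_div_iff₀ hℓpos] at h1
    linarith
  -- infinitely many ones
  have hinf : {n | v n = true}.Infinite := by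
    intro hfin
    set c := hfin.toFinset.card with hc
    have hle : ∀ ℓ, heightOfPrefix v ℓ ≤ c := by
      intro ℓ
      apply Finset.card_le_card
      intro y hy
      rw [Finset.mem_filter] at hy
      rw [Set.Finite.mem_toFinset]
      exact hy.2
    obtain ⟨M, hM⟩ := exists_nat_gt ((c : ℝ) / γ')
    set M1 : ℕ := max M N1 with hM1
    have h1 := hge M1 (le_max_right _ _)
    have h2 : (c : ℝ) / γ' < M1 := lt_of_lt_of_le hM (by exact_mod_cast le_max_left M N1)
    have hγ'0 : 0 < γ' := lt_trans hγ0 hγγ'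
    rw [div_lt_iff₀ hγ'0] at h2
    have h3 : (heightOfPrefix v M1 : ℝ) ≤ c := by exact_mod_cast hle M1
    nlinarith
  -- the comparison function for good times
  set F : ℕ → ℝ := fun ℓ => (heightOfPrefix v ℓ : ℝ) - γ * ℓ with hF
  have hFtop : Tendsto F atTop atTop := by
    have h1 : Tendsto (fun ℓ : ℕ => (γ' - γ) * (ℓ:ℝ)) atTop atTop :=
      Tendsto.const_mul_atTop (by linarith) tendsto_natCast_atTop_atTop
    apply tendsto_atTop_mono' atTop _ h1
    filter_upwards [eventually_atTop.2 ⟨N1, fun ℓ hℓ => hge ℓ hℓ⟩] with ℓ hℓ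
    rw [hF]
    simp only
    linarith
  -- good times
  set G : Set ℕ := {ℓ | 1 ≤ ℓ ∧ ∀ n ≥ ℓ, F ℓ ≤ F n} with hG
  have hGinf : G.Infinite := by
    apply Set.infinite_of_forall_exists_gt
    intro a
    obtain ⟨ℓ, hℓge, hℓgood⟩ := exists_good F hFtop (a + 1)
    exact ⟨ℓ, ⟨by omega, hℓgood⟩, by omega⟩
  -- all values are negative
  have hZneg : ∀ ℓ, Tword (wordPrefix v ℓ) ζ < 0 := by
    intro ℓ
    rw [key_identity]
    apply mul_neg_of_pos_of_neg
    · positivity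
    · have := zeta_lt v ζ hζ (heightOfPrefix v ℓ)
      linarith
  -- bound at good times
  set C : ℝ := 1 / (3 * (1 - (2:ℝ) ^ ((1:ℝ)/γ) / 3)) with hC
  have hGbound : ∀ ℓ ∈ G, Tword (wordPrefix v ℓ) ζ ∈ Set.Icc (-C) 0 := by
    intro ℓ hℓ
    constructor
    · have := good_bound v ζ hζ hinf γ hγ0 (by rw [← hβ]; exact hβγ) ℓ hℓ.2
      exact this
    · exact (hZneg ℓ).le
  set S : Set ℝ := {y : ℝ | ∃ ℓ : ℕ, 1 ≤ ℓ ∧ Tword (wordPrefix v ℓ) ζ = y} with hS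
  set V : Set ℝ := (fun ℓ => Tword (wordPrefix v ℓ) ζ) '' G with hV
  have hVS : V ⊆ S := by
    rintro y ⟨ℓ, hℓG, rfl⟩
    exact ⟨ℓ, hℓG.1, rfl⟩
  have hVIcc : V ⊆ Set.Icc (-C) 0 := by
    rintro y ⟨ℓ, hℓG, rfl⟩
    exact hGbound ℓ hℓG
  by_cases hVinf : V.Infinite
  · obtain ⟨p, _, hacc⟩ := hVinf.exists_accPt_of_subset_isCompact isCompact_Icc hVIcc
    exact ⟨p, hacc.mono (principal_mono.2 hVS)⟩
  · rw [Set.not_infinite] at hVinf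
    have hfiber : ∃ x ∈ V, {ℓ ∈ G | Tword (wordPrefix v ℓ) ζ = x}.Infinite := by
      by_contra hcon
      push_neg at hcon
      have hfin : ∀ x ∈ V, {ℓ ∈ G | Tword (wordPrefix v ℓ) ζ = x}.Finite := by
        intro x hx
        have := hcon x hx
        exact this
      have hsub : G ⊆ ⋃ x ∈ V, {ℓ ∈ G | Tword (wordPrefix v ℓ) ζ = x} := by
        intro ℓ hℓ
        exact Set.mem_biUnion (⟨ℓ, hℓ, rfl⟩ : Tword (wordPrefix v ℓ) ζ ∈ V) ⟨hℓ, rfl⟩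
      exact hGinf (Set.Finite.subset (Set.Finite.biUnion hVinf hfin) hsub)
    obtain ⟨x, _, hLinf⟩ := hfiber
    exact absurd (eventually_periodic_of_returns v ζ hZneg x _ hLinf (fun ℓ hℓ => hℓ.2)) hv
end

section
/- Let v be an aperiodic infinite binary word, let u be its prefix of length ℓ ≥ 1, and let r be the shifted word defined by r_j = v_{ℓ+j} for j ≥ 0. If the series Φ_ℝ(v) converges with sum ζ, then the series Φ_ℝ(r) converges and Φ_ℝ(r) = T_u(ζ). Conversely, if the series Φ_ℝ(r) converges, then the series Φ_ℝ(v) converges. -/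
open Filter

/- Auxiliary lemmas -/

lemma notEP_shift (v : ℕ → Bool) (hv : ¬ EventuallyPeriodicWord v) :
    ¬ EventuallyPeriodicWord (fun j => v (j + 1)) := by
  rintro ⟨p, hp, N, hN⟩
  apply hv
  refine ⟨p, hp, N + 1, fun n hn => ?_⟩
  have h1 := hN (n - 1) (by omega)
  simp only at h1
  have e1 : n - 1 + p + 1 = n + p := by omega
  have e2 : n - 1 + 1 = n := by omega
  rw [e1, e2] at h1
  exact h1

lemma ones_infinite (v : ℕ → Bool) (hv : ¬ EventuallyPeriodicWord v) :
    {n | v n = true}.Infinite := by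
  by_contra h
  rw [Set.not_infinite] at h
  apply hv
  obtain ⟨N, hN⟩ := h.bddAbove
  refine ⟨1, one_pos, N + 1, fun n hn => ?_⟩
  have h1 : v n = false := by
    by_contra hc
    have : v n = true := by simpa using hc
    have := hN this
    omega
  have h2 : v (n + 1) = false := by
    by_contra hc
    have : v (n + 1) = true := by simpa using hc
    have := hN this
    omega
  rw [h1, h2]

lemma shift_infinite (v : ℕ → Bool) (hinf : {n | v n = true}.Infinite) :
    {j | v (j + 1) = true}.Infinite := by
  by_contra h
  rw [Set.not_infinite] at h
  apply hinf
  have hsub : {n | v n = true} ⊆ insert 0 ((fun j => j + 1) '' {j | v (j + 1) = true}) := by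
    intro n hn
    cases n with
    | zero => exact Set.mem_insert _ _
    | succ k => exact Set.mem_insert_of_mem _ ⟨k, hn, rfl⟩
  exact ((h.image _).insert 0).subset hsub

lemma onePos_shift_false (v : ℕ → Bool) (hinf : {n | v n = true}.Infinite)
    (h0 : v 0 = false) (i : ℕ) :
    onePos v i = onePos (fun j => v (j + 1)) i + 1 := by
  have hq : {j | v (j + 1) = true}.Infinite := shift_infinite v hinf
  set n := Nat.nth (fun j => v (j + 1) = true) i with hn
  have hmem : v (n + 1) = true := Nat.nth_mem_of_infinite hq i
  have hcount : Nat.count (fun k => v k = true) (n + 1) = i := by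
    rw [Nat.count_succ']
    have : Nat.count (fun k => v (k + 1) = true) n = i := Nat.count_nth_of_infinite hq i
    rw [this]
    simp [h0]
  have := Nat.nth_count (p := fun k => v k = true) hmem
  rw [hcount] at this
  exact this

lemma onePos_zero_true (v : ℕ → Bool) (h0 : v 0 = true) : onePos v 0 = 0 :=
  Nat.nth_zero_of_zero h0

lemma onePos_shift_true (v : ℕ → Bool) (hinf : {n | v n = true}.Infinite)
    (h0 : v 0 = true) (i : ℕ) :
    onePos v (i + 1) = onePos (fun j => v (j + 1)) i + 1 := by
  have hq : {j | v (j + 1) = true}.Infinite := shift_infinite v hinf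
  set n := Nat.nth (fun j => v (j + 1) = true) i with hn
  have hmem : v (n + 1) = true := Nat.nth_mem_of_infinite hq i
  have hcount : Nat.count (fun k => v k = true) (n + 1) = i + 1 := by
    rw [Nat.count_succ']
    have : Nat.count (fun k => v (k + 1) = true) n = i := Nat.count_nth_of_infinite hq i
    rw [this]
    simp [h0]
  have := Nat.nth_count (p := fun k => v k = true) hmem
  rw [hcount] at this
  exact this

lemma phi_shift_false (v : ℕ → Bool) (hinf : {n | v n = true}.Infinite)
    (h0 : v 0 = false) (m : ℕ) :
    phiPartial (fun j => v (j + 1)) m = phiPartial v m / 2 := by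
  unfold phiPartial
  rw [neg_div, Finset.sum_div]
  congr 1
  apply Finset.sum_congr rfl
  intro i _
  rw [onePos_shift_false v hinf h0 i, pow_succ]
  ring

lemma phi_shift_true (v : ℕ → Bool) (hinf : {n | v n = true}.Infinite)
    (h0 : v 0 = true) (m : ℕ) :
    phiPartial v (m + 1) = 2 / 3 * phiPartial (fun j => v (j + 1)) m - 1 / 3 := by
  unfold phiPartial
  rw [Finset.sum_range_succ']
  have h1 : (2 : ℝ) ^ onePos v 0 / 3 ^ (0 + 1) = 1 / 3 := by
    rw [onePos_zero_true v h0]; norm_num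
  rw [h1]
  have h2 : ∀ i ∈ Finset.range m,
      (2 : ℝ) ^ onePos v (i + 1) / 3 ^ (i + 1 + 1)
        = 2 / 3 * ((2 : ℝ) ^ onePos (fun j => v (j + 1)) i / 3 ^ (i + 1)) := by
    intro i _
    rw [onePos_shift_true v hinf h0 i, pow_succ, pow_succ (3 : ℝ) (i + 1)]
    ring
  rw [Finset.sum_congr rfl h2, ← Finset.mul_sum]
  ring

/-- One-step version. -/
lemma step_lemma (v : ℕ → Bool) (hv : ¬ EventuallyPeriodicWord v) :
    (∀ ζ : ℝ, Tendsto (phiPartial v) atTop (nhds ζ) →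
      Tendsto (phiPartial fun j => v (j + 1)) atTop (nhds (Tb (v 0) ζ))) ∧
    ((∃ L : ℝ, Tendsto (phiPartial fun j => v (j + 1)) atTop (nhds L)) →
      ∃ L : ℝ, Tendsto (phiPartial v) atTop (nhds L)) := by
  have hinf := ones_infinite v hv
  cases h0 : v 0 with
  | false =>
    have heq : (phiPartial fun j => v (j + 1)) = fun m => phiPartial v m / 2 := by
      funext m; exact phi_shift_false v hinf h0 m
    constructor
    · intro ζ hζ
      rw [heq]
      simpa [Tb] using hζ.div_const 2
    · rintro ⟨L, hL⟩
      rw [heq] at hL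
      refine ⟨2 * L, ?_⟩
      have h2 : Tendsto (fun m => 2 * (phiPartial v m / 2)) atTop (nhds (2 * L)) :=
        hL.const_mul 2
      have e2 : (fun m => 2 * (phiPartial v m / 2)) = phiPartial v := by
        funext m; ring
      rwa [e2] at h2
  | true =>
    have heq : (phiPartial fun j => v (j + 1))
        = fun m => (3 * phiPartial v (m + 1) + 1) / 2 := by
      funext m
      have := phi_shift_true v hinf h0 m
      linarith
    constructor
    · intro ζ hζ
      have h' : Tendsto (fun m => phiPartial v (m + 1)) atTop (nhds ζ) :=
        hζ.comp (tendsto_add_atTop_nat 1)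
      have : Tendsto (fun m => (3 * phiPartial v (m + 1) + 1) / 2) atTop
          (nhds ((3 * ζ + 1) / 2)) := (((h'.const_mul 3).add_const 1).div_const 2)
      simp only [Tb, h0, if_true]
      rwa [heq]
    · rintro ⟨L, hL⟩
      have hL' : Tendsto (fun m => (3 * phiPartial v (m + 1) + 1) / 2) atTop (nhds L) := by
        rwa [heq] at hL
      have h1 : Tendsto (fun m => phiPartial v (m + 1)) atTop (nhds ((2 * L - 1) / 3)) := by
        have h2 : Tendsto (fun m => ((3 * phiPartial v (m + 1) + 1) / 2 * 2 - 1) / 3)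
            atTop (nhds ((L * 2 - 1) / 3)) := ((hL'.mul_const 2).sub_const 1).div_const 3
        have e : (fun m => ((3 * phiPartial v (m + 1) + 1) / 2 * 2 - 1) / 3)
            = fun m => phiPartial v (m + 1) := by funext m; ring
        rw [e] at h2
        convert h2 using 2
        ring
      exact ⟨(2 * L - 1) / 3, (tendsto_add_atTop_iff_nat 1).mp h1⟩

lemma main_lemma (ℓ : ℕ) : ∀ v : ℕ → Bool, ¬ EventuallyPeriodicWord v →
    (∀ ζ : ℝ, Tendsto (phiPartial v) atTop (nhds ζ) →
      Tendsto (phiPartial fun j => v (j + ℓ)) atTop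
        (nhds (Tword (wordPrefix v ℓ) ζ))) ∧
    ((∃ L : ℝ, Tendsto (phiPartial fun j => v (j + ℓ)) atTop (nhds L)) →
      ∃ L : ℝ, Tendsto (phiPartial v) atTop (nhds L)) := by
  induction ℓ with
  | zero =>
    intro v hv
    have e : (fun j => v (j + 0)) = v := by funext j; rw [Nat.add_zero]
    rw [e]
    exact ⟨fun ζ h => by simpa [wordPrefix, Tword] using h, fun h => h⟩
  | succ ℓ ih =>
    intro v hv
    set w : ℕ → Bool := fun j => v (j + 1) with hw
    have hwne : ¬ EventuallyPeriodicWord w := notEP_shift v hv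
    have eshift : (fun j => v (j + (ℓ + 1))) = fun j => w (j + ℓ) := by
      funext j
      show v (j + (ℓ + 1)) = v (j + ℓ + 1)
      rw [Nat.add_assoc]
    have epre : wordPrefix v (ℓ + 1) = v 0 :: wordPrefix w ℓ := by
      unfold wordPrefix
      rw [List.range_succ_eq_map, List.map_cons, List.map_map]
      congr 1
    constructor
    · intro ζ hζ
      have h1 := (step_lemma v hv).1 ζ hζ
      have h2 := (ih w hwne).1 (Tb (v 0) ζ) h1
      rw [eshift, epre]
      exact h2
    · rintro ⟨L, hL⟩
      rw [eshift] at hL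
      exact (step_lemma v hv).2 ((ih w hwne).2 ⟨L, hL⟩)

/-- Let `v` be aperiodic, `u` its prefix of length `ℓ ≥ 1` and `r` the shift
`r_j = v_{ℓ+j}`.  If `Φ_ℝ(v)` converges to `ζ` then `Φ_ℝ(r)` converges to
`T_u(ζ)`; conversely, if `Φ_ℝ(r)` converges then so does `Φ_ℝ(v)`. -/
theorem stmt13 (v : ℕ → Bool) (hv : ¬ EventuallyPeriodicWord v)
    (ℓ : ℕ) (hℓ : 1 ≤ ℓ) :
    (∀ ζ : ℝ, Tendsto (phiPartial v) atTop (nhds ζ) →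
      Tendsto (phiPartial fun j => v (ℓ + j)) atTop
        (nhds (Tword (wordPrefix v ℓ) ζ))) ∧
    ((∃ L : ℝ, Tendsto (phiPartial fun j => v (ℓ + j)) atTop (nhds L)) →
      ∃ L : ℝ, Tendsto (phiPartial v) atTop (nhds L)) := by
  have e : (fun j => v (ℓ + j)) = fun j => v (j + ℓ) := by
    funext j; rw [Nat.add_comm]
  rw [e]
  exact main_lemma ℓ v hv
end

section
/- Let v be an aperiodic infinite binary word such that the series Φ_ℝ(v) converges. For ℓ ≥ 1 let u_ℓ be the prefix of v of length ℓ and h(ℓ) its height. Then the sequence of rational numbers C(u_ℓ) = φ(u_ℓ)/(2^ℓ − 3^{h(ℓ)}) converges in ℝ to Φ_ℝ(v) as ℓ → ∞. -/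
open Filter

lemma phi_append (u : List Bool) (b : Bool) :
    phi (u ++ [b]) = if b then 3 * phi u + 2 ^ u.length else phi u := by
  simp [phi, phiAux]

lemma height_prefix (v : ℕ → Bool) (ℓ : ℕ) :
    wordHeight (wordPrefix v ℓ) = Nat.count (fun n => v n = true) ℓ := by
  induction ℓ with
  | zero => simp [wordHeight, wordPrefix]
  | succ n ih =>
    rw [wordPrefix_succ, Nat.count_succ]
    cases h : v n <;> simp [wordHeight, h, ← ih]

lemma length_prefix (v : ℕ → Bool) (ℓ : ℕ) : (wordPrefix v ℓ).length = ℓ := by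
  simp [wordPrefix]

lemma exists_one_of_not_periodic {v : ℕ → Bool} (hv : ¬ EventuallyPeriodicWord v) :
    {n | v n = true}.Infinite := by
  by_contra hfin
  rw [Set.not_infinite] at hfin
  apply hv
  obtain ⟨N, hN⟩ := (Set.finite_iff_bddAbove.mp hfin)
  refine ⟨1, one_pos, N + 1, fun n hn => ?_⟩
  have h1 : v n = false := by
    by_contra h
    have : n ∈ {n | v n = true} := by simpa using eq_true_of_ne_false h
    have := hN this
    omega
  have h2 : v (n + 1) = false := by
    by_contra h
    have : n + 1 ∈ {n | v n = true} := by simpa using eq_true_of_ne_false h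
    have := hN this
    omega
  rw [h1, h2]

lemma phi_prefix_eq (v : ℕ → Bool) (ℓ : ℕ) :
    (phi (wordPrefix v ℓ) : ℝ) =
      3 ^ (Nat.count (fun n => v n = true) ℓ) *
        ∑ i ∈ Finset.range (Nat.count (fun n => v n = true) ℓ),
          (2 : ℝ) ^ onePos v i / 3 ^ (i + 1) := by
  induction ℓ with
  | zero => simp [phi, phiAux, wordPrefix]
  | succ n ih =>
    rw [wordPrefix_succ, phi_append, Nat.count_succ, length_prefix]
    cases h : v n with
    | false => simpa [h] using ih
    | true =>
      have hnth : onePos v (Nat.count (fun n => v n = true) n) = n :=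
        Nat.nth_count (p := fun n => v n = true) h
      simp only [h, if_pos, if_true]
      push_cast
      rw [Finset.sum_range_succ, hnth, mul_add, ih]
      have h3 : (3 : ℝ) ^ (Nat.count (fun n => v n = true) n + 1) ≠ 0 := by positivity
      field_simp
      ring

/-- If `v` is aperiodic and `Φ_ℝ(v)` converges to `ζ`, then the rational numbers
`C(u_ℓ) = φ(u_ℓ)/(2^ℓ − 3^{h(ℓ)})`, for `u_ℓ` the prefix of `v` of length `ℓ`,
converge in `ℝ` to `ζ` as `ℓ → ∞`. -/
theorem stmt15 (v : ℕ → Bool) (hv : ¬ EventuallyPeriodicWord v)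
    (ζ : ℝ) (hζ : Tendsto (phiPartial v) atTop (nhds ζ)) :
    Tendsto (fun ℓ : ℕ =>
        (phi (wordPrefix v ℓ) : ℝ) /
          ((2 : ℝ) ^ ℓ - (3 : ℝ) ^ wordHeight (wordPrefix v ℓ)))
      atTop (nhds ζ) := by
  classical
  have hinf : (setOf (fun n => v n = true)).Infinite := exists_one_of_not_periodic hv
  set p : ℕ → Prop := fun n => v n = true with hp
  -- h(ℓ) → ∞
  have hctop : Tendsto (fun ℓ => Nat.count p ℓ) atTop atTop := by
    rw [tendsto_atTop_atTop]
    intro b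
    refine ⟨Nat.nth p b + 1, fun n hn => ?_⟩
    have h1 : Nat.count p (Nat.nth p b + 1) ≤ Nat.count p n := Nat.count_monotone p hn
    rw [Nat.count_nth_succ_of_infinite hinf] at h1
    omega
  -- the terms of the series tend to 0
  have hterm : Tendsto (fun m : ℕ => (2 : ℝ) ^ (Nat.nth p m) / 3 ^ m) atTop (nhds 0) := by
    have h1 : Tendsto (fun m : ℕ => phiPartial v m - phiPartial v (m + 1)) atTop
        (nhds (ζ - ζ)) := hζ.sub (hζ.comp (tendsto_add_atTop_nat 1))
    have h2 : ∀ m : ℕ, phiPartial v m - phiPartial v (m + 1)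
        = (2 : ℝ) ^ (Nat.nth p m) / 3 ^ (m + 1) := by
      intro m
      simp [phiPartial, Finset.sum_range_succ, onePos]
      rfl
    simp only [h2, sub_self] at h1
    have h3 := h1.const_mul (3 : ℝ)
    rw [mul_zero] at h3
    convert h3 using 2 with m
    rw [pow_succ]
    field_simp
  -- 2^ℓ / 3^{h(ℓ)} → 0
  have hr : Tendsto (fun ℓ : ℕ => (2 : ℝ) ^ ℓ / 3 ^ (Nat.count p ℓ)) atTop (nhds 0) := by
    have hcomp := hterm.comp hctop
    refine squeeze_zero (fun ℓ => by positivity) (fun ℓ => ?_) hcomp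
    have hle : ℓ ≤ Nat.nth p (Nat.count p ℓ) := Nat.le_nth_count hinf ℓ
    have h2 : (2 : ℝ) ^ ℓ ≤ 2 ^ (Nat.nth p (Nat.count p ℓ)) :=
      pow_le_pow_right₀ (by norm_num) hle
    exact div_le_div_of_nonneg_right h2 (by positivity) |>.trans_eq rfl
  -- rewrite the quotient
  have heq : ∀ ℓ : ℕ,
      (phi (wordPrefix v ℓ) : ℝ) /
        ((2 : ℝ) ^ ℓ - (3 : ℝ) ^ wordHeight (wordPrefix v ℓ))
      = phiPartial v (Nat.count p ℓ) / (1 - (2 : ℝ) ^ ℓ / 3 ^ (Nat.count p ℓ)) := by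
    intro ℓ
    rw [phi_prefix_eq, height_prefix]
    have h3 : (3 : ℝ) ^ (Nat.count p ℓ) ≠ 0 := by positivity
    have hden : (2 : ℝ) ^ ℓ - (3 : ℝ) ^ (Nat.count p ℓ)
        = (3 : ℝ) ^ (Nat.count p ℓ) * -(1 - (2 : ℝ) ^ ℓ / 3 ^ (Nat.count p ℓ)) := by
      field_simp
      ring
    rw [hden, mul_div_mul_left _ _ h3, div_neg]
    simp [phiPartial, neg_div]
    rfl
  simp only [heq]
  have hnum : Tendsto (fun ℓ => phiPartial v (Nat.count p ℓ)) atTop (nhds ζ) :=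
    hζ.comp hctop
  have hden : Tendsto (fun ℓ : ℕ => 1 - (2 : ℝ) ^ ℓ / 3 ^ (Nat.count p ℓ)) atTop
      (nhds 1) := by
    have h := (tendsto_const_nhds (x := (1:ℝ))).sub hr
    simpa using h
  have h := hnum.div hden one_ne_zero
  rw [div_one] at h
  exact h
end
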